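/- Let A ⊂ ℝⁿ be a compact uniformly convex set with modulus of convexity δ_A, let 𝒞 be a grid with step Δ ∈ (0,1/2), and suppose ε_Δ ∈ (0, diam A) satisfies δ_A(ε_Δ)/ε_Δ = Δ/(4 − Δ²). Let Â be the external polyhedral approximation of A on 𝒞. Then for every p ∈ ℝⁿ, 0 ≤ s(p, Â) − s(p, A) ≤ (8/7)·ε_Δ·Δ·‖p‖. -/

import Mathlib

open Set Metric Pointwise

/-- Supporting function `s(p, A) = sup_{x ∈ A} ⟪p, x⟫`. -/
noncomputable def suppF {n : ℕ} (p : EuclideanSpace ℝ (Fin n))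
    (A : Set (EuclideanSpace ℝ (Fin n))) : ℝ :=
  sSup ((fun x => (inner ℝ p x : ℝ)) '' A)

/-- Modulus of convexity of a set `A`. -/
noncomputable def modConv {n : ℕ} (A : Set (EuclideanSpace ℝ (Fin n))) (ε : ℝ) : ℝ :=
  sSup {δ : ℝ | 0 ≤ δ ∧ ∀ x₁ ∈ A, ∀ x₂ ∈ A, ‖x₁ - x₂‖ = ε →
    Metric.closedBall (midpoint ℝ x₁ x₂) δ ⊆ A}

/-- `A` is uniformly convex: its modulus of convexity is positive on `(0, diam A)`. -/
def UnifConvex {n : ℕ} (A : Set (EuclideanSpace ℝ (Fin n))) : Prop :=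
  ∀ ε : ℝ, 0 < ε → ε < Metric.diam A → 0 < modConv A ε

/-- `C` is a grid with step `Δ`: a finite set of unit vectors such that every nonzero `p`
whose normalization is not in `C` is a positive combination of grid vectors that are
pairwise `Δ`-close. -/
def IsGrid {n : ℕ} (C : Finset (EuclideanSpace ℝ (Fin n))) (Δ : ℝ) : Prop :=
  (∀ p ∈ C, ‖p‖ = 1) ∧
  ∀ p : EuclideanSpace ℝ (Fin n), p ≠ 0 → ‖p‖⁻¹ • p ∉ C →
    ∃ (k : ℕ) (q : Fin k → EuclideanSpace ℝ (Fin n)) (α : Fin k → ℝ),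
      (∀ i, q i ∈ C) ∧ (∀ i, 0 < α i) ∧ p = ∑ i, α i • q i ∧
      ∀ i j, ‖q i - q j‖ < Δ

/-- External polyhedral approximation of `A` on the grid `C`. -/
def polyApprox {n : ℕ} (C : Finset (EuclideanSpace ℝ (Fin n)))
    (A : Set (EuclideanSpace ℝ (Fin n))) : Set (EuclideanSpace ℝ (Fin n)) :=
  {x | ∀ p ∈ C, (inner ℝ p x : ℝ) ≤ suppF p A}

/-- Geometric (Minkowski–Pontryagin) difference `B ⊖ A = {x | x + A ⊆ B}`. -/
def geomDiff {n : ℕ} (B A : Set (EuclideanSpace ℝ (Fin n))) :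
    Set (EuclideanSpace ℝ (Fin n)) :=
  {x | ∀ a ∈ A, x + a ∈ B}

section aux
variable {n : ℕ}

lemma mid_mem {A : Set (EuclideanSpace ℝ (Fin n))} (h : Convex ℝ A)
    {x y : EuclideanSpace ℝ (Fin n)} (hx : x ∈ A) (hy : y ∈ A) : midpoint ℝ x y ∈ A := by
  have := h hx hy (by norm_num : (0:ℝ) ≤ 1/2) (by norm_num : (0:ℝ) ≤ 1/2) (by norm_num)
  convert this using 1
  rw [midpoint_eq_smul_add, invOf_eq_inv]
  module

lemma inner_cont (p : EuclideanSpace ℝ (Fin n)) :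
    Continuous (fun x : EuclideanSpace ℝ (Fin n) => (inner ℝ p x : ℝ)) :=
  continuous_const.inner continuous_id

lemma suppF_bddAbove {A : Set (EuclideanSpace ℝ (Fin n))} (hA : IsCompact A)
    (p : EuclideanSpace ℝ (Fin n)) :
    BddAbove ((fun x => (inner ℝ p x : ℝ)) '' A) :=
  (hA.image (inner_cont p)).bddAbove

lemma suppF_exists_max {A : Set (EuclideanSpace ℝ (Fin n))} (hA : IsCompact A)
    (hne : A.Nonempty) (p : EuclideanSpace ℝ (Fin n)) :
    ∃ x ∈ A, suppF p A = (inner ℝ p x : ℝ) ∧ ∀ y ∈ A, (inner ℝ p y : ℝ) ≤ inner ℝ p x := by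
  obtain ⟨x, hx, hmax⟩ := hA.exists_isMaxOn hne (inner_cont p).continuousOn
  refine ⟨x, hx, ?_, fun y hy => hmax hy⟩
  refine le_antisymm (csSup_le (hne.image _) ?_) (le_csSup (suppF_bddAbove hA p) ⟨x, hx, rfl⟩)
  rintro _ ⟨y, hy, rfl⟩
  exact hmax hy

lemma modConv_ball {A : Set (EuclideanSpace ℝ (Fin n))} (hA : IsCompact A)
    (hconv : Convex ℝ A) {ε : ℝ} (hε : 0 < ε)
    {x₁ x₂ : EuclideanSpace ℝ (Fin n)} (h₁ : x₁ ∈ A) (h₂ : x₂ ∈ A) (hn : ‖x₁ - x₂‖ = ε) :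
    Metric.closedBall (midpoint ℝ x₁ x₂) (modConv A ε) ⊆ A := by
  set S := {δ : ℝ | 0 ≤ δ ∧ ∀ y₁ ∈ A, ∀ y₂ ∈ A, ‖y₁ - y₂‖ = ε →
    Metric.closedBall (midpoint ℝ y₁ y₂) δ ⊆ A} with hS
  have h0S : (0:ℝ) ∈ S := by
    refine ⟨le_refl 0, fun y₁ hy₁ y₂ hy₂ _ => ?_⟩
    rw [Metric.closedBall_zero]
    exact Set.singleton_subset_iff.2 (mid_mem hconv hy₁ hy₂)
  have hSne : S.Nonempty := ⟨0, h0S⟩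
  set m := midpoint ℝ x₁ x₂ with hm
  have hmA : m ∈ A := mid_mem hconv h₁ h₂
  set u : EuclideanSpace ℝ (Fin n) := ‖x₁ - x₂‖⁻¹ • (x₁ - x₂) with hu
  have hvne : ‖x₁ - x₂‖ ≠ 0 := by rw [hn]; exact hε.ne'
  have hun : ‖u‖ = 1 := by
    rw [hu, norm_smul, norm_inv, norm_norm, inv_mul_cancel₀ hvne]
  have hSbdd : BddAbove S := by
    refine ⟨Metric.diam A, fun δ hδ => ?_⟩
    have hz : m + δ • u ∈ A := by
      apply hδ.2 x₁ h₁ x₂ h₂ hn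
      rw [Metric.mem_closedBall, dist_eq_norm]
      rw [show m + δ • u - m = δ • u by abel, norm_smul, hun, mul_one, Real.norm_eq_abs]
      exact (abs_of_nonneg hδ.1).le
    have : dist (m + δ • u) m = δ := by
      rw [dist_eq_norm]
      simp [norm_smul, hun, abs_of_nonneg hδ.1]
    calc δ = dist (m + δ • u) m := this.symm
      _ ≤ Metric.diam A := Metric.dist_le_diam_of_mem hA.isBounded hz hmA
  set D := modConv A ε with hD
  have hDS : D = sSup S := rfl
  have hDnn : 0 ≤ D := hDS ▸ le_csSup hSbdd h0S
  intro w hw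
  rw [Metric.mem_closedBall, dist_eq_norm] at hw
  rw [← hA.isClosed.closure_eq]
  rw [Metric.mem_closure_iff]
  intro r hr
  rcases eq_or_lt_of_le hDnn with hD0 | hDpos
  · refine ⟨m, hmA, ?_⟩
    have : w = m := by
      have : ‖w - m‖ ≤ 0 := by rw [← hD0] at hw; exact hw
      have := le_antisymm this (norm_nonneg _)
      rwa [norm_eq_zero, sub_eq_zero] at this
    rw [this, dist_self]; exact hr
  · obtain ⟨δ, hδS, hδlt⟩ := exists_lt_of_lt_csSup hSne
      (show D - r < sSup S by rw [← hDS]; linarith)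
    have hδle : δ ≤ D := hDS ▸ le_csSup hSbdd hδS
    set c := δ / D with hc
    have hc0 : 0 ≤ c := div_nonneg hδS.1 hDnn
    have hc1 : c ≤ 1 := (div_le_one hDpos).2 hδle
    have hcD : c * D = δ := div_mul_cancel₀ δ hDpos.ne'
    refine ⟨m + c • (w - m), ?_, ?_⟩
    · apply hδS.2 x₁ h₁ x₂ h₂ hn
      rw [Metric.mem_closedBall, dist_eq_norm]
      rw [show m + c • (w - m) - m = c • (w - m) by module]
      rw [norm_smul, Real.norm_eq_abs, abs_of_nonneg hc0]
      calc c * ‖w - m‖ ≤ c * D := by apply mul_le_mul_of_nonneg_left hw hc0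
        _ = δ := hcD
    · rw [dist_eq_norm, show w - (m + c • (w - m)) = (1 - c) • (w - m) by module,
        norm_smul, Real.norm_eq_abs, abs_of_nonneg (by linarith : (0:ℝ) ≤ 1 - c)]
      calc (1 - c) * ‖w - m‖ ≤ (1 - c) * D := by
            apply mul_le_mul_of_nonneg_left hw (by linarith)
        _ = D - δ := by rw [sub_mul, one_mul, hcD]
        _ < r := by linarith

end aux

section core
variable {n : ℕ}

lemma max_points_close {A : Set (EuclideanSpace ℝ (Fin n))} (hA : IsCompact A)
    (hconv : Convex ℝ A) (huc : ∀ ε : ℝ, 0 < ε → ε < Metric.diam A → 0 < modConv A ε)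
    {Δ εΔ : ℝ} (hΔ : Δ ∈ Set.Ioo (0:ℝ) (1/2)) (hεΔ : εΔ ∈ Set.Ioo 0 (Metric.diam A))
    (heq : modConv A εΔ / εΔ = Δ / (4 - Δ^2))
    {q₁ q₂ x₁ x₂ : EuclideanSpace ℝ (Fin n)}
    (hq₁ : ‖q₁‖ = 1) (hq₂ : ‖q₂‖ = 1) (hqq : ‖q₁ - q₂‖ < Δ)
    (hx₁ : x₁ ∈ A) (hx₂ : x₂ ∈ A)
    (hm₁ : ∀ y ∈ A, (inner ℝ q₁ y : ℝ) ≤ inner ℝ q₁ x₁)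
    (hm₂ : ∀ y ∈ A, (inner ℝ q₂ y : ℝ) ≤ inner ℝ q₂ x₂) :
    ‖x₁ - x₂‖ ≤ εΔ := by
  by_contra hcon
  push_neg at hcon
  set ε := ‖x₁ - x₂‖ with hε
  have hε0 : 0 < ε := lt_trans hεΔ.1 hcon
  set D := modConv A εΔ with hD
  have hDpos : 0 < D := huc εΔ hεΔ.1 hεΔ.2
  have hΔ2 : (0:ℝ) < 4 - Δ^2 := by nlinarith [hΔ.1, hΔ.2]
  have heq' : D * (4 - Δ^2) = Δ * εΔ := by
    rw [div_eq_div_iff hεΔ.1.ne' hΔ2.ne'] at heq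
    linarith [heq]
  set t := εΔ / ε with ht
  have ht0 : 0 < t := div_pos hεΔ.1 hε0
  have ht1 : t < 1 := (div_lt_one hε0).2 hcon
  have hte : t * ε = εΔ := div_mul_cancel₀ εΔ hε0.ne'
  have key : ∀ (q a b : EuclideanSpace ℝ (Fin n)), ‖q‖ = 1 → a ∈ A → b ∈ A → ‖a - b‖ = ε →
      (∀ y ∈ A, (inner ℝ q y : ℝ) ≤ inner ℝ q a) → D ≤ t/2 * (inner ℝ q (a - b) : ℝ) := by
    intro q a b hq ha hb hab hmax
    have hyA : a + t • (b - a) ∈ A := by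
      have := hconv ha hb (by linarith : (0:ℝ) ≤ 1 - t) (le_of_lt ht0) (by ring)
      convert this using 1
      module
    have hnab : ‖a - (a + t • (b - a))‖ = εΔ := by
      rw [show a - (a + t • (b - a)) = t • (a - b) by module, norm_smul, Real.norm_eq_abs,
        abs_of_nonneg ht0.le, hab, hte]
    have hball := modConv_ball hA hconv hεΔ.1 ha hyA hnab
    set m := midpoint ℝ a (a + t • (b - a)) with hm
    have hz : m + D • q ∈ A := by
      apply hball
      rw [Metric.mem_closedBall, dist_eq_norm]
      rw [show m + D • q - m = D • q by module, norm_smul, Real.norm_eq_abs,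
        abs_of_nonneg hDpos.le, hq, mul_one]
    have h1 : (inner ℝ q (m + D • q) : ℝ) ≤ inner ℝ q a := hmax _ hz
    have h2 : (inner ℝ q (m + D • q) : ℝ) = inner ℝ q m + D := by
      rw [inner_add_right, real_inner_smul_right, real_inner_self_eq_norm_mul_norm, hq]; ring
    have h3 : (inner ℝ q a : ℝ) - inner ℝ q m = t/2 * (inner ℝ q (a - b) : ℝ) := by
      rw [← inner_sub_right, hm, show a - midpoint ℝ a (a + t • (b - a)) = (t/2) • (a - b) by
        rw [midpoint_eq_smul_add, invOf_eq_inv]; module, real_inner_smul_right]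
    rw [h2] at h1
    linarith
  have k1 := key q₁ x₁ x₂ hq₁ hx₁ hx₂ rfl hm₁
  have k2 := key q₂ x₂ x₁ hq₂ hx₂ hx₁ (by rw [norm_sub_rev]) hm₂
  have hsum : (inner ℝ q₁ (x₁ - x₂) : ℝ) + (inner ℝ q₂ (x₂ - x₁) : ℝ)
      = (inner ℝ (q₁ - q₂) (x₁ - x₂) : ℝ) := by
    rw [inner_sub_left, show x₂ - x₁ = -(x₁ - x₂) by module, inner_neg_right]
    ring
  have hcs : (inner ℝ (q₁ - q₂) (x₁ - x₂) : ℝ) ≤ ‖q₁ - q₂‖ * ε := real_inner_le_norm _ _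
  have s1 : 2 * D ≤ t/2 * ((inner ℝ q₁ (x₁ - x₂) : ℝ) + (inner ℝ q₂ (x₂ - x₁) : ℝ)) := by
    have : t/2 * ((inner ℝ q₁ (x₁ - x₂) : ℝ) + (inner ℝ q₂ (x₂ - x₁) : ℝ))
        = t/2 * (inner ℝ q₁ (x₁ - x₂) : ℝ) + t/2 * (inner ℝ q₂ (x₂ - x₁) : ℝ) := by ring
    linarith
  have s2 : t/2 * ((inner ℝ q₁ (x₁ - x₂) : ℝ) + (inner ℝ q₂ (x₂ - x₁) : ℝ)) ≤ t/2 * (‖q₁ - q₂‖ * ε) := by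
    apply mul_le_mul_of_nonneg_left _ (by linarith : (0:ℝ) ≤ t/2)
    rw [hsum]; exact hcs
  have s3 : ‖q₁ - q₂‖ * ε < Δ * ε := mul_lt_mul_of_pos_right hqq hε0
  have s4 : t/2 * (‖q₁ - q₂‖ * ε) < t/2 * (Δ * ε) :=
    mul_lt_mul_of_pos_left s3 (by linarith)
  have s5 : t/2 * (Δ * ε) = Δ * εΔ / 2 := by
    rw [← hte]; ring
  have hfin : 4 * D < Δ * εΔ := by linarith
  nlinarith [mul_pos hDpos (mul_pos hΔ.1 hΔ.1), sq_nonneg Δ, hfin, heq']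

end core

/-- supporting-function form of the approximation estimate. -/
theorem suppF_polyApprox_le
    (n : ℕ) (A : Set (EuclideanSpace ℝ (Fin n)))
    (hA : IsCompact A) (hconv : Convex ℝ A) (huc : UnifConvex A)
    (Δ εΔ : ℝ) (hΔ : Δ ∈ Set.Ioo (0 : ℝ) (1/2))
    (hεΔ : εΔ ∈ Set.Ioo 0 (Metric.diam A))
    (heq : modConv A εΔ / εΔ = Δ / (4 - Δ^2))
    (C : Finset (EuclideanSpace ℝ (Fin n))) (hC : IsGrid C Δ) :
    ∀ p : EuclideanSpace ℝ (Fin n),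
      0 ≤ suppF p (polyApprox C A) - suppF p A ∧
      suppF p (polyApprox C A) - suppF p A ≤ 8/7 * εΔ * Δ * ‖p‖ := by
  have hAne : A.Nonempty := by
    by_contra h
    rw [Set.not_nonempty_iff_eq_empty] at h
    have := hεΔ.2
    rw [h, Metric.diam_empty] at this
    exact absurd this (not_lt.2 hεΔ.1.le)
  have hsub : A ⊆ polyApprox C A := fun x hx q _ => le_csSup (suppF_bddAbove hA q) ⟨x, hx, rfl⟩
  intro p
  have hRHS : 0 ≤ 8/7 * εΔ * Δ * ‖p‖ := by
    have := norm_nonneg p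
    have h1 := hεΔ.1.le
    have h2 := hΔ.1.le
    positivity
  have main : ∃ M : ℝ, (∀ x ∈ polyApprox C A, (inner ℝ p x : ℝ) ≤ M) ∧
      M ≤ suppF p A + 8/7 * εΔ * Δ * ‖p‖ := by
    rcases eq_or_ne p 0 with rfl | hp0
    · refine ⟨suppF 0 A, fun x _ => ?_, by linarith⟩
      have h0 : ((inner ℝ (0 : EuclideanSpace ℝ (Fin n)) x : ℝ)) = 0 := by simp
      rw [h0]
      obtain ⟨a, ha⟩ := hAne
      have : ((inner ℝ (0 : EuclideanSpace ℝ (Fin n)) a : ℝ)) ≤ suppF 0 A :=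
        le_csSup (suppF_bddAbove hA 0) ⟨a, ha, rfl⟩
      simpa using this
    · by_cases hmem : ‖p‖⁻¹ • p ∈ C
      · refine ⟨suppF p A, ?_, by linarith⟩
        intro x hx
        set u : EuclideanSpace ℝ (Fin n) := ‖p‖⁻¹ • p with hu
        obtain ⟨xs, hxs, hsupu, hmaxu⟩ := suppF_exists_max hA hAne u
        have hxu : (inner ℝ u x : ℝ) ≤ suppF u A := hx u hmem
        have hiu : ∀ y : EuclideanSpace ℝ (Fin n), ‖p‖ * (inner ℝ u y : ℝ) = (inner ℝ p y : ℝ) := by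
          intro y
          rw [hu, real_inner_smul_left, ← mul_assoc,
            mul_inv_cancel₀ (norm_ne_zero_iff.2 hp0), one_mul]
        calc (inner ℝ p x : ℝ) = ‖p‖ * (inner ℝ u x : ℝ) := (hiu x).symm
          _ ≤ ‖p‖ * (inner ℝ u xs : ℝ) := by
              apply mul_le_mul_of_nonneg_left _ (norm_nonneg p)
              rw [← hsupu]; exact hxu
          _ = (inner ℝ p xs : ℝ) := hiu xs
          _ ≤ suppF p A := le_csSup (suppF_bddAbove hA p) ⟨xs, hxs, rfl⟩
      · obtain ⟨k, q, α, hqC, hα, hpsum, hclose⟩ := hC.2 p hp0 hmem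
        have hk : k ≠ 0 := by
          rintro rfl
          exact hp0 (by simpa using hpsum)
        have hq1 : ∀ i, ‖q i‖ = 1 := fun i => hC.1 _ (hqC i)
        choose x hxA hsup hmax using fun i => suppF_exists_max hA hAne (q i)
        set i₀ : Fin k := ⟨0, Nat.pos_of_ne_zero hk⟩ with hi₀
        refine ⟨∑ i, α i * (inner ℝ (q i) (x i) : ℝ), ?_, ?_⟩
        · intro z hz
          have hz' : (inner ℝ p z : ℝ) = ∑ i, α i * (inner ℝ (q i) z : ℝ) := by
            rw [hpsum, sum_inner]
            exact Finset.sum_congr rfl fun i _ => real_inner_smul_left _ _ _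
          rw [hz']
          apply Finset.sum_le_sum
          intro i _
          apply mul_le_mul_of_nonneg_left _ (hα i).le
          calc (inner ℝ (q i) z : ℝ) ≤ suppF (q i) A := hz (q i) (hqC i)
            _ = (inner ℝ (q i) (x i) : ℝ) := hsup i
        · have hpx : (inner ℝ p (x i₀) : ℝ) ≤ suppF p A :=
            le_csSup (suppF_bddAbove hA p) ⟨_, hxA i₀, rfl⟩
          have hinner : (inner ℝ p (x i₀) : ℝ) = ∑ i, α i * (inner ℝ (q i) (x i₀) : ℝ) := by
            rw [hpsum, sum_inner]
            exact Finset.sum_congr rfl fun i _ => real_inner_smul_left _ _ _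
          have hdist : ∀ i, ‖x i - x i₀‖ ≤ εΔ := fun i =>
            max_points_close hA hconv huc hΔ hεΔ heq (hq1 i) (hq1 i₀) (hclose i i₀)
              (hxA i) (hxA i₀) (hmax i) (hmax i₀)
          have hterm : ∀ i, (inner ℝ (q i) (x i) : ℝ) - (inner ℝ (q i) (x i₀) : ℝ) ≤ Δ * εΔ := by
            intro i
            have e1 : (inner ℝ (q i) (x i) : ℝ) - (inner ℝ (q i) (x i₀) : ℝ)
                = (inner ℝ (q i) (x i - x i₀) : ℝ) := (inner_sub_right _ _ _).symm
            have e2 : (inner ℝ (q i) (x i - x i₀) : ℝ)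
                = (inner ℝ (q i₀) (x i - x i₀) : ℝ) + (inner ℝ (q i - q i₀) (x i - x i₀) : ℝ) := by
              rw [inner_sub_left]; ring
            have e3 : (inner ℝ (q i₀) (x i - x i₀) : ℝ) ≤ 0 := by
              rw [inner_sub_right]
              have := hmax i₀ _ (hxA i)
              linarith
            have e4 : (inner ℝ (q i - q i₀) (x i - x i₀) : ℝ) ≤ Δ * εΔ := by
              calc (inner ℝ (q i - q i₀) (x i - x i₀) : ℝ) ≤ ‖q i - q i₀‖ * ‖x i - x i₀‖ :=
                    real_inner_le_norm _ _
                _ ≤ Δ * εΔ := mul_le_mul (hclose i i₀).le (hdist i) (norm_nonneg _) hΔ.1.le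
            linarith [e1, e2, e3, e4]
          have hsumα : ∑ i, α i ≤ 8/7 * ‖p‖ := by
            have h78 : ∀ i, (7:ℝ)/8 ≤ (inner ℝ (q i₀) (q i) : ℝ) := by
              intro i
              have h := hclose i₀ i
              have hsq : ‖q i₀ - q i‖^2 = 2 - 2 * (inner ℝ (q i₀) (q i) : ℝ) := by
                rw [norm_sub_sq_real, hq1 i₀, hq1 i]; ring
              have hlt : ‖q i₀ - q i‖^2 < Δ^2 := by
                nlinarith [norm_nonneg (q i₀ - q i), hΔ.1]
              have hΔsq : Δ^2 < 1/4 := by nlinarith [hΔ.1, hΔ.2]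
              linarith
            have hip : (inner ℝ (q i₀) p : ℝ) = ∑ i, α i * (inner ℝ (q i₀) (q i) : ℝ) := by
              rw [hpsum, inner_sum]
              exact Finset.sum_congr rfl fun i _ => real_inner_smul_right _ _ _
            have hlow : (7:ℝ)/8 * (∑ i, α i) ≤ (inner ℝ (q i₀) p : ℝ) := by
              rw [hip, Finset.mul_sum]
              apply Finset.sum_le_sum
              intro i _
              have := mul_le_mul_of_nonneg_left (h78 i) (hα i).le
              linarith
            have hup : (inner ℝ (q i₀) p : ℝ) ≤ ‖p‖ := by
              calc (inner ℝ (q i₀) p : ℝ) ≤ ‖q i₀‖ * ‖p‖ := real_inner_le_norm _ _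
                _ = ‖p‖ := by rw [hq1 i₀, one_mul]
            linarith
          have hMb : (∑ i, α i * (inner ℝ (q i) (x i) : ℝ)) - (inner ℝ p (x i₀) : ℝ)
              ≤ (∑ i, α i) * (Δ * εΔ) := by
            rw [hinner, ← Finset.sum_sub_distrib, Finset.sum_mul]
            apply Finset.sum_le_sum
            intro i _
            have := mul_le_mul_of_nonneg_left (hterm i) (hα i).le
            linarith [this]
          have hbb : (∑ i, α i) * (Δ * εΔ) ≤ 8/7 * ‖p‖ * (Δ * εΔ) :=
            mul_le_mul_of_nonneg_right hsumα
              (mul_nonneg hΔ.1.le hεΔ.1.le)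
          have : 8/7 * ‖p‖ * (Δ * εΔ) = 8/7 * εΔ * Δ * ‖p‖ := by ring
          linarith
  obtain ⟨M, hub, hM⟩ := main
  have hbdd : BddAbove ((fun x => (inner ℝ p x : ℝ)) '' polyApprox C A) := by
    refine ⟨M, ?_⟩
    rintro _ ⟨x, hx, rfl⟩
    exact hub x hx
  have hne : (polyApprox C A).Nonempty := ⟨hAne.choose, hsub hAne.choose_spec⟩
  constructor
  · have : suppF p A ≤ suppF p (polyApprox C A) :=
      csSup_le_csSup hbdd (hAne.image _) (Set.image_mono hsub)
    linarith
  · have h1 : suppF p (polyApprox C A) ≤ M := by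
      apply csSup_le (hne.image _)
      rintro _ ⟨x, hx, rfl⟩
      exact hub x hx
    linarith
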